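/- Let f : [0,1] → ℝ be a function. There exists a normalized unitarily invariant norm |||·||| on M₂(ℂ) with f(s) = ||| diag(1, s) ||| for all s ∈ [0,1] if and only if f is increasing, convex on [0,1], and satisfies (1+s)/2 ≤ f(s) ≤ 1 for all s ∈ [0,1]. -/

import Mathlib

/-- `N` is a unitarily invariant norm on `M₂(ℂ)`. -/
def IsUINorm (N : Matrix (Fin 2) (Fin 2) ℂ → ℝ) : Prop :=
  (∀ T, 0 ≤ N T) ∧ (∀ T, N T = 0 → T = 0) ∧
  (∀ (c : ℂ) (T), N (c • T) = ‖c‖ * N T) ∧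
  (∀ S T, N (S + T) ≤ N S + N T) ∧
  (∀ U ∈ Matrix.unitaryGroup (Fin 2) ℂ, ∀ V ∈ Matrix.unitaryGroup (Fin 2) ℂ,
    ∀ T, N (U * T * V) = N T)

namespace Stmt17

open Matrix

noncomputable section

abbrev M2 := Matrix (Fin 2) (Fin 2) ℂ

def JJ : M2 := diagonal ![1,-1]
def WW : M2 := !![0,1;1,0]

attribute [local simp] Matrix.mul_apply Fin.sum_univ_two Matrix.diagonal_apply
  Matrix.star_apply Matrix.one_apply Matrix.vecMul dotProduct

lemma hJ : JJ ∈ Matrix.unitaryGroup (Fin 2) ℂ := by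
  rw [Matrix.mem_unitaryGroup_iff]
  ext i j
  fin_cases i <;> fin_cases j <;> simp [JJ]

lemma hW : WW ∈ Matrix.unitaryGroup (Fin 2) ℂ := by
  rw [Matrix.mem_unitaryGroup_iff]
  ext i j
  fin_cases i <;> fin_cases j <;> simp [WW]

lemma id1 (y : ℝ) : diagonal ![1,(y:ℂ)] * JJ = diagonal ![1, -(y:ℂ)] := by
  ext i j
  fin_cases i <;> fin_cases j <;> simp [JJ]

lemma id2 (s : ℝ) : WW * diagonal ![1,(s:ℂ)] * WW = diagonal ![(s:ℂ),1] := by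
  ext i j
  fin_cases i <;> fin_cases j <;> simp [WW, Matrix.vecHead, Matrix.vecTail]

lemma id3 {a b x y : ℝ} (hab : a + b = 1) :
    diagonal ![1, ((a*x+b*y:ℝ):ℂ)] = (a:ℂ) • diagonal ![1,(x:ℂ)] + (b:ℂ) • diagonal ![1,(y:ℂ)] := by
  have hab' : (a:ℂ) + (b:ℂ) = 1 := by exact_mod_cast congrArg (fun r : ℝ => (r:ℂ)) hab
  ext i j
  fin_cases i <;> fin_cases j
  · simp; linear_combination -hab'
  · simp
  · simp
  · simp

lemma id4 (s : ℝ) : diagonal ![1,(s:ℂ)] + diagonal ![(s:ℂ),1] = ((1+s:ℝ):ℂ) • (1:M2) := by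
  ext i j
  fin_cases i <;> fin_cases j <;> simp <;> push_cast <;> ring

lemma id5 (s : ℝ) : diagonal ![1,(s:ℂ)] = (((1+s)/2:ℝ):ℂ) • (1:M2) + (((1-s)/2:ℝ):ℂ) • JJ := by
  ext i j
  fin_cases i <;> fin_cases j <;> simp [JJ] <;> push_cast <;> ring

lemma id6 {x y lam mu : ℝ} (hy : 0 < y) (hlam : lam = (y+x)/(2*y)) (hmu : mu = (y-x)/(2*y)) :
    diagonal ![1,(x:ℂ)] = (lam:ℂ) • diagonal ![1,(y:ℂ)] + (mu:ℂ) • diagonal ![1,-(y:ℂ)] := by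
  have hy' : (y:ℂ) ≠ 0 := by exact_mod_cast hy.ne'
  ext i j
  fin_cases i <;> fin_cases j <;> simp [hlam, hmu] <;> push_cast <;> field_simp <;> ring

lemma id7 : diagonal ![(1:ℂ),1] = (1:M2) := by
  ext i j
  fin_cases i <;> fin_cases j <;> simp

/-! ### Forward direction -/

theorem forward {f : ℝ → ℝ} {N : Matrix (Fin 2) (Fin 2) ℂ → ℝ} (hN : IsUINorm N) (hN1 : N 1 = 1)
    (hf : ∀ s ∈ Set.Icc (0:ℝ) 1, f s = N (Matrix.diagonal ![1, (s : ℂ)])) :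
    MonotoneOn f (Set.Icc (0:ℝ) 1) ∧ ConvexOn ℝ (Set.Icc (0:ℝ) 1) f ∧
      ∀ s ∈ Set.Icc (0:ℝ) 1, (1 + s) / 2 ≤ f s ∧ f s ≤ 1 := by
  obtain ⟨hpos, hdef, hsmul, htri, hui⟩ := hN
  have hone : (1:M2) ∈ Matrix.unitaryGroup (Fin 2) ℂ := one_mem _
  have hNreal : ∀ (r:ℝ), 0 ≤ r → ∀ T, N ((r:ℂ) • T) = r * N T := by
    intro r hr T
    rw [hsmul, Complex.norm_real, Real.norm_eq_abs, abs_of_nonneg hr]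
  have hNJ : N JJ = 1 := by
    have h := hui 1 hone JJ hJ 1
    rw [one_mul, one_mul] at h
    rw [h, hN1]
  have hNneg : ∀ y : ℝ, N (diagonal ![1,-(y:ℂ)]) = N (diagonal ![1,(y:ℂ)]) := by
    intro y
    have h := hui 1 hone JJ hJ (diagonal ![1,(y:ℂ)])
    rw [one_mul, id1] at h
    exact h
  have hNswap : ∀ s : ℝ, N (diagonal ![(s:ℂ),1]) = N (diagonal ![1,(s:ℂ)]) := by
    intro s
    have h := hui WW hW WW hW (diagonal ![1,(s:ℂ)])
    rw [id2] at h
    exact h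
  refine ⟨?_, ?_, ?_⟩
  · -- monotone
    intro x hx y hy hxy
    rw [hf x hx, hf y hy]
    rcases eq_or_lt_of_le (hx.1.trans hxy) with hy0 | hy0
    · have hx0 : x = 0 := le_antisymm (hxy.trans hy0.symm.le) hx.1
      rw [hx0, ← hy0]
    · set lam : ℝ := (y+x)/(2*y) with hlam
      set mu : ℝ := (y-x)/(2*y) with hmu
      have hlam0 : 0 ≤ lam := div_nonneg (by linarith [hx.1]) (by linarith)
      have hmu0 : 0 ≤ mu := div_nonneg (by linarith) (by linarith)
      have hsum : lam + mu = 1 := by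
        rw [hlam, hmu]; field_simp; ring
      calc N (diagonal ![1,(x:ℂ)])
          = N ((lam:ℂ) • diagonal ![1,(y:ℂ)] + (mu:ℂ) • diagonal ![1,-(y:ℂ)]) := by
            rw [← id6 hy0 hlam hmu]
        _ ≤ N ((lam:ℂ) • diagonal ![1,(y:ℂ)]) + N ((mu:ℂ) • diagonal ![1,-(y:ℂ)]) := htri _ _
        _ = lam * N (diagonal ![1,(y:ℂ)]) + mu * N (diagonal ![1,-(y:ℂ)]) := by
            rw [hNreal lam hlam0, hNreal mu hmu0]
        _ = (lam + mu) * N (diagonal ![1,(y:ℂ)]) := by rw [hNneg]; ring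
        _ = N (diagonal ![1,(y:ℂ)]) := by rw [hsum, one_mul]
  · -- convex
    refine ⟨convex_Icc _ _, ?_⟩
    intro x hx y hy a b ha hb hab
    have hmem : a • x + b • y ∈ Set.Icc (0:ℝ) 1 := (convex_Icc (0:ℝ) 1) hx hy ha hb hab
    simp only [smul_eq_mul] at hmem ⊢
    rw [hf _ hmem, hf x hx, hf y hy, id3 hab]
    calc N ((a:ℂ) • diagonal ![1,(x:ℂ)] + (b:ℂ) • diagonal ![1,(y:ℂ)])
        ≤ N ((a:ℂ) • diagonal ![1,(x:ℂ)]) + N ((b:ℂ) • diagonal ![1,(y:ℂ)]) := htri _ _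
      _ = a * N (diagonal ![1,(x:ℂ)]) + b * N (diagonal ![1,(y:ℂ)]) := by
          rw [hNreal a ha, hNreal b hb]
  · -- bounds
    intro s hs
    constructor
    · have h4 : N (((1+s:ℝ):ℂ) • (1:M2)) = 1 + s := by
        rw [hNreal _ (by linarith [hs.1]) 1, hN1, mul_one]
      have h5 : N (((1+s:ℝ):ℂ) • (1:M2)) ≤ 2 * N (diagonal ![1,(s:ℂ)]) := by
        rw [← id4 s]
        calc N (diagonal ![1,(s:ℂ)] + diagonal ![(s:ℂ),1])
            ≤ N (diagonal ![1,(s:ℂ)]) + N (diagonal ![(s:ℂ),1]) := htri _ _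
          _ = 2 * N (diagonal ![1,(s:ℂ)]) := by rw [hNswap]; ring
      rw [hf s hs]
      rw [h4] at h5
      linarith
    · rw [hf s hs, id5 s]
      calc N ((((1+s)/2:ℝ):ℂ) • (1:M2) + (((1-s)/2:ℝ):ℂ) • JJ)
          ≤ N ((((1+s)/2:ℝ):ℂ) • (1:M2)) + N ((((1-s)/2:ℝ):ℂ) • JJ) := htri _ _
        _ = (1+s)/2 * N 1 + (1-s)/2 * N JJ := by
            rw [hNreal _ (by linarith [hs.1]), hNreal _ (by linarith [hs.2])]
        _ = 1 := by rw [hN1, hNJ]; ring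


open scoped Matrix.Norms.L2Operator


lemma coord_le (y : EuclideanSpace ℂ (Fin 2)) (i : Fin 2) : ‖y i‖ ≤ ‖y‖ := by
  rw [EuclideanSpace.norm_eq, ← Real.sqrt_sq (norm_nonneg (y i))]
  exact Real.sqrt_le_sqrt (Finset.single_le_sum (f := fun j => ‖y j‖ ^ 2)
    (fun _ _ => sq_nonneg _) (Finset.mem_univ i))

lemma entry_le (A : M2) (i j : Fin 2) : ‖A i j‖ ≤ ‖A‖ := by
  classical
  have h := A.l2_opNorm_mulVec ((EuclideanSpace.equiv (Fin 2) ℂ).symm (Pi.single j 1))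
  have hx : ‖(EuclideanSpace.equiv (Fin 2) ℂ).symm (Pi.single j 1)‖ = 1 := by
    simp [EuclideanSpace.norm_single]
  rw [hx, mul_one] at h
  refine le_trans ?_ h
  have h2 := coord_le ((EuclideanSpace.equiv (Fin 2) ℂ).symm
      (A *ᵥ ((EuclideanSpace.equiv (Fin 2) ℂ).symm (Pi.single j 1)))) i
  refine le_trans (le_of_eq ?_) h2
  show ‖A i j‖ = ‖(A *ᵥ (Pi.single j 1)) i‖
  rw [Matrix.mulVec_single]
  simp

lemma norm_diag_le {d : Fin 2 → ℂ} (hd : ∀ i, ‖d i‖ ≤ 1) : ‖(diagonal d : M2)‖ ≤ 1 := by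
  rw [Matrix.l2_opNorm_def]
  refine ContinuousLinearMap.opNorm_le_bound _ zero_le_one fun x => ?_
  rw [one_mul]
  have hform : ∀ z : EuclideanSpace ℂ (Fin 2), ‖z‖ = Real.sqrt (∑ i, ‖z i‖ ^ 2) :=
    fun z => EuclideanSpace.norm_eq z
  rw [hform, hform x]
  apply Real.sqrt_le_sqrt
  apply Finset.sum_le_sum
  intro i _
  have happ : (((Matrix.toEuclideanLin ≪≫ₗ LinearMap.toContinuousLinearMap) (diagonal d)) x) i
      = d i * x i := by
    show ((diagonal d) *ᵥ x) i = d i * x i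
    rw [Matrix.mulVec_diagonal]
  rw [happ]
  have h1 : ‖d i * x i‖ ≤ ‖x i‖ := by
    rw [norm_mul]
    calc ‖d i‖ * ‖x i‖ ≤ 1 * ‖x i‖ := by gcongr; exact hd i
    _ = ‖x i‖ := one_mul _
  exact pow_le_pow_left₀ (norm_nonneg _) h1 2

lemma norm_diag_one_s {s : ℝ} (h0 : 0 ≤ s) (h1 : s ≤ 1) :
    ‖(diagonal ![1,(s:ℂ)] : M2)‖ = 1 := by
  refine le_antisymm (norm_diag_le ?_) ?_
  · intro i
    fin_cases i <;> simp [abs_of_nonneg h0, h1]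
  · have h := entry_le (diagonal ![1,(s:ℂ)]) 0 0
    simpa using h

/-! ### The dual (trace) norm -/

def tn (T : M2) : ℝ := sSup ((fun X : M2 => ‖(X * T).trace‖) '' {X : M2 | ‖X‖ ≤ 1})

lemma tn_elt_le (T X : M2) (hX : ‖X‖ ≤ 1) : ‖(X * T).trace‖ ≤ 2 * ‖T‖ := by
  rw [Matrix.trace_fin_two]
  have h00 : ‖(X * T) 0 0‖ ≤ ‖T‖ := by
    refine (entry_le _ 0 0).trans ?_
    calc ‖X * T‖ ≤ ‖X‖ * ‖T‖ := norm_mul_le X T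
      _ ≤ 1 * ‖T‖ := by gcongr
      _ = ‖T‖ := one_mul _
  have h11 : ‖(X * T) 1 1‖ ≤ ‖T‖ := by
    refine (entry_le _ 1 1).trans ?_
    calc ‖X * T‖ ≤ ‖X‖ * ‖T‖ := norm_mul_le X T
      _ ≤ 1 * ‖T‖ := by gcongr
      _ = ‖T‖ := one_mul _
  calc ‖(X * T) 0 0 + (X * T) 1 1‖ ≤ ‖(X * T) 0 0‖ + ‖(X * T) 1 1‖ := norm_add_le _ _
    _ ≤ 2 * ‖T‖ := by linarith

lemma tn_bdd (T : M2) : BddAbove ((fun X : M2 => ‖(X * T).trace‖) '' {X : M2 | ‖X‖ ≤ 1}) := by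
  refine ⟨2 * ‖T‖, ?_⟩
  rintro x ⟨X, hX, rfl⟩
  exact tn_elt_le T X hX

lemma tn_ne (T : M2) : ((fun X : M2 => ‖(X * T).trace‖) '' {X : M2 | ‖X‖ ≤ 1}).Nonempty :=
  ⟨‖((0 : M2) * T).trace‖, ⟨0, by simp, rfl⟩⟩

lemma le_tn (T X : M2) (hX : ‖X‖ ≤ 1) : ‖(X * T).trace‖ ≤ tn T :=
  le_csSup (tn_bdd T) ⟨X, hX, rfl⟩

lemma tn_nonneg (T : M2) : 0 ≤ tn T := by
  have h := le_tn T 0 (by simp)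
  simpa using h

lemma tn_le (T : M2) : tn T ≤ 2 * ‖T‖ := by
  refine csSup_le (tn_ne T) ?_
  rintro x ⟨X, hX, rfl⟩
  exact tn_elt_le T X hX

lemma tn_add (A B : M2) : tn (A + B) ≤ tn A + tn B := by
  refine csSup_le (tn_ne _) ?_
  rintro x ⟨X, hX, rfl⟩
  dsimp only
  have : X * (A + B) = X * A + X * B := mul_add X A B
  rw [this, Matrix.trace_add]
  calc ‖(X * A).trace + (X * B).trace‖ ≤ ‖(X * A).trace‖ + ‖(X * B).trace‖ := norm_add_le _ _
    _ ≤ tn A + tn B := add_le_add (le_tn A X hX) (le_tn B X hX)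

lemma tn_smul_le (c : ℂ) (T : M2) : tn (c • T) ≤ ‖c‖ * tn T := by
  refine csSup_le (tn_ne _) ?_
  rintro x ⟨X, hX, rfl⟩
  dsimp only
  have h1 : X * (c • T) = c • (X * T) := mul_smul_comm c X T
  rw [h1, Matrix.trace_smul, norm_smul]
  exact mul_le_mul_of_nonneg_left (le_tn T X hX) (norm_nonneg c)

lemma tn_zero : tn (0 : M2) = 0 :=
  le_antisymm (by simpa using tn_le 0) (tn_nonneg 0)

lemma tn_smul (c : ℂ) (T : M2) : tn (c • T) = ‖c‖ * tn T := by
  rcases eq_or_ne c 0 with rfl | hc0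
  · simp [tn_zero]
  · refine le_antisymm (tn_smul_le c T) ?_
    have h := tn_smul_le c⁻¹ (c • T)
    rw [smul_smul, inv_mul_cancel₀ hc0, one_smul, norm_inv] at h
    have hc' : 0 < ‖c‖ := norm_pos_iff.mpr hc0
    calc ‖c‖ * tn T ≤ ‖c‖ * (‖c‖⁻¹ * tn (c • T)) := by
          exact mul_le_mul_of_nonneg_left h hc'.le
      _ = tn (c • T) := by rw [← mul_assoc, mul_inv_cancel₀ hc'.ne', one_mul]

lemma tn_UI_le {U V : M2} (hU : U ∈ Matrix.unitaryGroup (Fin 2) ℂ)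
    (hV : V ∈ Matrix.unitaryGroup (Fin 2) ℂ) (T : M2) : tn (U * T * V) ≤ tn T := by
  refine csSup_le (tn_ne _) ?_
  rintro x ⟨X, hX, rfl⟩
  dsimp only
  have htr : (X * (U * T * V)).trace = ((V * X * U) * T).trace := by
    calc (X * (U * T * V)).trace = ((X * U * T) * V).trace := by rw [← mul_assoc, ← mul_assoc]
      _ = (V * (X * U * T)).trace := Matrix.trace_mul_comm _ _
      _ = ((V * X * U) * T).trace := by rw [← mul_assoc, ← mul_assoc]
  rw [htr]
  refine le_tn T (V * X * U) ?_
  rw [CStarRing.norm_mul_mem_unitary _ hU, CStarRing.norm_mem_unitary_mul _ hV]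
  exact hX

lemma tn_UI {U V : M2} (hU : U ∈ Matrix.unitaryGroup (Fin 2) ℂ)
    (hV : V ∈ Matrix.unitaryGroup (Fin 2) ℂ) (T : M2) : tn (U * T * V) = tn T := by
  refine le_antisymm (tn_UI_le hU hV T) ?_
  have h := tn_UI_le (Unitary.star_mem hU) (Unitary.star_mem hV) (U * T * V)
  have he : star U * (U * T * V) * star V = T := by
    have h1 : star U * U = 1 := hU.1
    have h2 : V * star V = 1 := hV.2
    calc star U * (U * T * V) * star V = (star U * U) * T * (V * star V) := by
          simp only [mul_assoc]
      _ = T := by rw [h1, h2, one_mul, mul_one]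
  rw [he] at h
  exact h

lemma tn_diag {s : ℝ} (h0 : 0 ≤ s) (h1 : s ≤ 1) :
    tn (diagonal ![1,(s:ℂ)]) = 1 + s := by
  refine le_antisymm ?_ ?_
  · refine csSup_le (tn_ne _) ?_
    rintro x ⟨X, hX, rfl⟩
    dsimp only
    have htr : (X * diagonal ![1,(s:ℂ)]).trace = X 0 0 + X 1 1 * (s:ℂ) := by
      rw [Matrix.trace_fin_two, Matrix.mul_diagonal, Matrix.mul_diagonal]
      simp
    rw [htr]
    calc ‖X 0 0 + X 1 1 * (s:ℂ)‖ ≤ ‖X 0 0‖ + ‖X 1 1 * (s:ℂ)‖ := norm_add_le _ _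
      _ = ‖X 0 0‖ + ‖X 1 1‖ * s := by rw [norm_mul]; simp [abs_of_nonneg h0]
      _ ≤ 1 + 1 * s := by
          have e0 := (entry_le X 0 0).trans hX
          have e1 := (entry_le X 1 1).trans hX
          gcongr
      _ = 1 + s := by ring
  · have h := le_tn (diagonal ![1,(s:ℂ)]) 1 (le_of_eq CStarRing.norm_one)
    rw [one_mul, Matrix.trace_fin_two] at h
    have heq : (diagonal ![1,(s:ℂ)] : M2) 0 0 + (diagonal ![1,(s:ℂ)] : M2) 1 1
        = ((1+s:ℝ):ℂ) := by
      simp [Matrix.diagonal_apply]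
    rw [heq] at h
    have hnorm : ‖((1+s:ℝ):ℂ)‖ = 1 + s := by
      rw [Complex.norm_real, Real.norm_eq_abs, abs_of_nonneg (by linarith)]
    rw [hnorm] at h
    exact h

/-! ### Support pairs -/

def Sset (f : ℝ → ℝ) : Set (ℝ × ℝ) :=
  {p | 0 ≤ p.2 ∧ p.2 ≤ p.1 ∧ ∀ s ∈ Set.Icc (0:ℝ) 1, p.1 + p.2 * s ≤ f s}

lemma base_mem {f : ℝ → ℝ} (hm : MonotoneOn f (Set.Icc (0:ℝ) 1))
    (hb : ∀ s ∈ Set.Icc (0:ℝ) 1, (1 + s) / 2 ≤ f s ∧ f s ≤ 1) :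
    ((f 0, 0) : ℝ × ℝ) ∈ Sset f := by
  refine ⟨le_rfl, by have := (hb 0 ⟨le_rfl, zero_le_one⟩).1; simpa using by linarith, ?_⟩
  intro s hs
  simpa using hm ⟨le_rfl, zero_le_one⟩ hs hs.1

lemma Sset_bounds {f : ℝ → ℝ}
    (hb : ∀ s ∈ Set.Icc (0:ℝ) 1, (1 + s) / 2 ≤ f s ∧ f s ≤ 1)
    {p : ℝ × ℝ} (hp : p ∈ Sset f) : 0 ≤ p.2 ∧ p.2 ≤ p.1 ∧ p.1 ≤ 1 := by
  refine ⟨hp.1, hp.2.1, ?_⟩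
  have h := hp.2.2 0 ⟨le_rfl, zero_le_one⟩
  have h2 := (hb 0 ⟨le_rfl, zero_le_one⟩).2
  simp at h
  linarith

lemma f_one {f : ℝ → ℝ}
    (hb : ∀ s ∈ Set.Icc (0:ℝ) 1, (1 + s) / 2 ≤ f s ∧ f s ≤ 1) : f 1 = 1 := by
  have h := hb 1 ⟨zero_le_one, le_rfl⟩
  have := h.1
  have := h.2
  linarith

lemma support_pair {f : ℝ → ℝ} (hm : MonotoneOn f (Set.Icc (0:ℝ) 1))
    (hc : ConvexOn ℝ (Set.Icc (0:ℝ) 1) f)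
    (hb : ∀ s ∈ Set.Icc (0:ℝ) 1, (1 + s) / 2 ≤ f s ∧ f s ≤ 1)
    {s0 : ℝ} (h0 : 0 ≤ s0) (h1 : s0 < 1) :
    ∃ p : ℝ × ℝ, p ∈ Sset f ∧ p.1 + p.2 * s0 = f s0 := by
  have hs0 : s0 ∈ Set.Icc (0:ℝ) 1 := ⟨h0, h1.le⟩
  have hf1 : f 1 = 1 := f_one hb
  set Q : Set ℝ := (fun t => (f t - f s0)/(t - s0)) '' Set.Ioc s0 1 with hQdef
  have hQne : ((f 1 - f s0)/(1 - s0)) ∈ Q := ⟨1, ⟨h1, le_rfl⟩, rfl⟩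
  have hQ0 : ∀ q ∈ Q, 0 ≤ q := by
    rintro q ⟨t, ht, rfl⟩
    have htI : t ∈ Set.Icc (0:ℝ) 1 := ⟨h0.trans ht.1.le, ht.2⟩
    exact div_nonneg (sub_nonneg.2 (hm hs0 htI ht.1.le)) (by linarith [ht.1])
  have hQbdd : BddBelow Q := ⟨0, fun q hq => hQ0 q hq⟩
  set b := sInf Q with hbdef
  have hb0 : 0 ≤ b := le_csInf ⟨_, hQne⟩ hQ0
  have hfs0 : (1+s0)/2 ≤ f s0 := (hb s0 hs0).1
  have hbhalf : b ≤ 1/2 := by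
    have h := csInf_le hQbdd hQne
    have h2 : (f 1 - f s0)/(1-s0) ≤ 1/2 := by
      rw [hf1, div_le_iff₀ (by linarith)]
      linarith
    linarith
  refine ⟨(f s0 - b * s0, b), ⟨hb0, ?_, ?_⟩, by ring⟩
  · -- b ≤ f s0 - b * s0
    have hkey : b * (1 + s0) ≤ (1/2) * (1 + s0) :=
      mul_le_mul_of_nonneg_right hbhalf (by linarith)
    simp only
    nlinarith
  · intro s hs
    simp only
    rcases lt_trichotomy s s0 with hlt | heq | hgt
    · have key : (f s0 - f s)/(s0 - s) ≤ b := by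
        refine le_csInf ⟨_, hQne⟩ ?_
        rintro q ⟨t, ht, rfl⟩
        exact hc.slope_mono_adjacent hs ⟨h0.trans ht.1.le, ht.2⟩ hlt ht.1
      have key2 : f s0 - f s ≤ b * (s0 - s) := by
        rw [div_le_iff₀ (by linarith)] at key
        linarith
      linarith
    · rw [heq]; linarith
    · have hmemQ : (f s - f s0)/(s - s0) ∈ Q := ⟨s, ⟨hgt, hs.2⟩, rfl⟩
      have key : b ≤ (f s - f s0)/(s - s0) := csInf_le hQbdd hmemQ
      rw [le_div_iff₀ (by linarith)] at key
      linarith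

/-! ### The norm NN -/

def NN (f : ℝ → ℝ) (T : M2) : ℝ :=
  sSup ((fun p : ℝ × ℝ => (p.1 - p.2) * ‖T‖ + p.2 * tn T) '' Sset f)

section NNlemmas

variable {f : ℝ → ℝ} (hm : MonotoneOn f (Set.Icc (0:ℝ) 1))
  (hc : ConvexOn ℝ (Set.Icc (0:ℝ) 1) f)
  (hb : ∀ s ∈ Set.Icc (0:ℝ) 1, (1 + s) / 2 ≤ f s ∧ f s ≤ 1)

include hm hc hb

lemma NN_bdd (T : M2) :
    BddAbove ((fun p : ℝ × ℝ => (p.1 - p.2) * ‖T‖ + p.2 * tn T) '' Sset f) := by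
  refine ⟨‖T‖ + tn T, ?_⟩
  rintro x ⟨p, hp, rfl⟩
  obtain ⟨h2, h21, h11⟩ := Sset_bounds hb hp
  dsimp only
  have hT := norm_nonneg T
  have htn := tn_nonneg T
  nlinarith

lemma NN_ne (T : M2) :
    ((fun p : ℝ × ℝ => (p.1 - p.2) * ‖T‖ + p.2 * tn T) '' Sset f).Nonempty :=
  ⟨_, ⟨(f 0, 0), base_mem hm hb, rfl⟩⟩

lemma le_NN {p : ℝ × ℝ} (hp : p ∈ Sset f) (T : M2) :
    (p.1 - p.2) * ‖T‖ + p.2 * tn T ≤ NN f T :=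
  le_csSup (NN_bdd hm hc hb T) ⟨p, hp, rfl⟩

lemma NN_lower (T : M2) : f 0 * ‖T‖ ≤ NN f T := by
  have h := le_NN hm hc hb (base_mem hm hb) T
  simpa using h

lemma NN_nonneg (T : M2) : 0 ≤ NN f T := by
  refine le_trans ?_ (NN_lower hm hc hb T)
  have : (0:ℝ) ≤ f 0 := by have := (hb 0 ⟨le_rfl, zero_le_one⟩).1; linarith
  exact mul_nonneg this (norm_nonneg T)

lemma NN_def_prop (T : M2) (h : NN f T = 0) : T = 0 := by
  have h1 := NN_lower hm hc hb T
  rw [h] at h1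
  have hf0 : (1:ℝ)/2 ≤ f 0 := by have := (hb 0 ⟨le_rfl, zero_le_one⟩).1; linarith
  have : ‖T‖ ≤ 0 := by nlinarith [norm_nonneg T]
  have : ‖T‖ = 0 := le_antisymm this (norm_nonneg T)
  exact norm_eq_zero.mp this

lemma NN_add (A B : M2) : NN f (A + B) ≤ NN f A + NN f B := by
  refine csSup_le (NN_ne hm hc hb _) ?_
  rintro x ⟨p, hp, rfl⟩
  dsimp only
  obtain ⟨h2, h21, h11⟩ := Sset_bounds hb hp
  calc (p.1 - p.2) * ‖A + B‖ + p.2 * tn (A + B)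
      ≤ (p.1 - p.2) * (‖A‖ + ‖B‖) + p.2 * (tn A + tn B) := by
        have := norm_add_le A B
        have := tn_add A B
        have hp12 : 0 ≤ p.1 - p.2 := by linarith
        nlinarith
    _ = ((p.1 - p.2) * ‖A‖ + p.2 * tn A) + ((p.1 - p.2) * ‖B‖ + p.2 * tn B) := by ring
    _ ≤ NN f A + NN f B := add_le_add (le_NN hm hc hb hp A) (le_NN hm hc hb hp B)

lemma NN_smul_le (c : ℂ) (T : M2) : NN f (c • T) ≤ ‖c‖ * NN f T := by
  refine csSup_le (NN_ne hm hc hb _) ?_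
  rintro x ⟨p, hp, rfl⟩
  dsimp only
  rw [norm_smul, tn_smul]
  calc (p.1 - p.2) * (‖c‖ * ‖T‖) + p.2 * (‖c‖ * tn T)
      = ‖c‖ * ((p.1 - p.2) * ‖T‖ + p.2 * tn T) := by ring
    _ ≤ ‖c‖ * NN f T := mul_le_mul_of_nonneg_left (le_NN hm hc hb hp T) (norm_nonneg c)

lemma NN_smul (c : ℂ) (T : M2) : NN f (c • T) = ‖c‖ * NN f T := by
  rcases eq_or_ne c 0 with rfl | hc0
  · simp only [zero_smul, norm_zero, zero_mul]
    refine le_antisymm ?_ (NN_nonneg hm hc hb 0)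
    refine csSup_le (NN_ne hm hc hb _) ?_
    rintro x ⟨p, hp, rfl⟩
    simp [tn_zero]
  · refine le_antisymm (NN_smul_le hm hc hb c T) ?_
    have h := NN_smul_le hm hc hb c⁻¹ (c • T)
    rw [smul_smul, inv_mul_cancel₀ hc0, one_smul, norm_inv] at h
    have hc' : 0 < ‖c‖ := norm_pos_iff.mpr hc0
    calc ‖c‖ * NN f T ≤ ‖c‖ * (‖c‖⁻¹ * NN f (c • T)) :=
          mul_le_mul_of_nonneg_left h hc'.le
      _ = NN f (c • T) := by rw [← mul_assoc, mul_inv_cancel₀ hc'.ne', one_mul]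

omit hm hc hb in
lemma NN_UI {U V : M2} (hU : U ∈ Matrix.unitaryGroup (Fin 2) ℂ)
    (hV : V ∈ Matrix.unitaryGroup (Fin 2) ℂ) (T : M2) : NN f (U * T * V) = NN f T := by
  unfold NN
  rw [CStarRing.norm_mul_mem_unitary _ hV, CStarRing.norm_mem_unitary_mul _ hU, tn_UI hU hV]

lemma NN_diag {s : ℝ} (hs : s ∈ Set.Icc (0:ℝ) 1) :
    NN f (diagonal ![1,(s:ℂ)]) = f s := by
  have hnorm : ‖(diagonal ![1,(s:ℂ)] : M2)‖ = 1 := norm_diag_one_s hs.1 hs.2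
  have htn : tn (diagonal ![1,(s:ℂ)]) = 1 + s := tn_diag hs.1 hs.2
  refine le_antisymm ?_ ?_
  · refine csSup_le (NN_ne hm hc hb _) ?_
    rintro x ⟨p, hp, rfl⟩
    dsimp only
    rw [hnorm, htn]
    have := hp.2.2 s hs
    linarith [this]
  · rcases lt_or_eq_of_le hs.2 with hlt | heq
    · obtain ⟨p, hp, hval⟩ := support_pair hm hc hb hs.1 hlt
      have : f s = (p.1 - p.2) * ‖(diagonal ![1,(s:ℂ)] : M2)‖ + p.2 * tn (diagonal ![1,(s:ℂ)]) := by
        rw [hnorm, htn]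
        linarith [hval]
      rw [this]
      exact le_NN hm hc hb hp _
    · -- s = 1
      subst heq
      rw [f_one hb]
      by_contra hcon
      push_neg at hcon
      set D : M2 := diagonal ![1,((1:ℝ):ℂ)] with hDdef
      have hcon' : NN f D < 1 := hcon
      set s0 : ℝ := max 0 (NN f D) with hs0def
      have hs00 : 0 ≤ s0 := le_max_left _ _
      have hs01 : s0 < 1 := by
        rw [hs0def]
        exact max_lt zero_lt_one hcon'
      obtain ⟨p, hp, hval⟩ := support_pair hm hc hb hs00 hs01
      have hle : (p.1 - p.2) * ‖D‖ + p.2 * tn D ≤ NN f D := le_NN hm hc hb hp D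
      rw [hnorm, htn] at hle
      have hfs0 : (1+s0)/2 ≤ f s0 := (hb s0 ⟨hs00, hs01.le⟩).1
      have hNNs0 : NN f D < (1 + s0)/2 := by
        have : NN f D ≤ s0 := le_max_right _ _
        linarith
      have hp2 : 0 ≤ p.2 := hp.1
      -- p.1 + p.2 * 1 ≥ p.1 + p.2 * s0 = f s0
      have : f s0 ≤ NN f D := by
        have h1 : p.1 + p.2 * s0 ≤ p.1 + p.2 * 1 := by nlinarith [hs01.le]
        have h2 : (p.1 - p.2) * 1 + p.2 * (1 + 1) = p.1 + p.2 * 1 := by ring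
        linarith [hval, hle]
      linarith

end NNlemmas

theorem backward {f : ℝ → ℝ} (hm : MonotoneOn f (Set.Icc (0:ℝ) 1))
    (hc : ConvexOn ℝ (Set.Icc (0:ℝ) 1) f)
    (hb : ∀ s ∈ Set.Icc (0:ℝ) 1, (1 + s) / 2 ≤ f s ∧ f s ≤ 1) :
    ∃ N : Matrix (Fin 2) (Fin 2) ℂ → ℝ, IsUINorm N ∧ N 1 = 1 ∧
      ∀ s ∈ Set.Icc (0:ℝ) 1, f s = N (Matrix.diagonal ![1, (s : ℂ)]) := by
  refine ⟨NN f, ⟨fun T => NN_nonneg hm hc hb T, fun T => NN_def_prop hm hc hb T, ?_,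
    fun A B => NN_add hm hc hb A B, ?_⟩, ?_, ?_⟩
  · intro c T
    rw [NN_smul hm hc hb c T]
  · intro U hU V hV T
    exact NN_UI hU hV T
  · have h := NN_diag hm hc hb (s := 1) ⟨zero_le_one, le_rfl⟩
    have hD : (diagonal ![1,((1:ℝ):ℂ)] : M2) = 1 := by rw [Complex.ofReal_one]; exact id7
    rw [hD] at h
    rw [h, f_one hb]
  · intro s hs
    exact (NN_diag hm hc hb hs).symm

end

end Stmt17

/-- A function `f : [0,1] → ℝ` arises as `f(s) = ||| diag(1, s) |||` for some normalized
unitarily invariant norm on `M₂(ℂ)` iff `f` is increasing, convex, and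
`(1+s)/2 ≤ f(s) ≤ 1` on `[0,1]`. -/
theorem stmt_17 (f : ℝ → ℝ) :
    (∃ N : Matrix (Fin 2) (Fin 2) ℂ → ℝ, IsUINorm N ∧ N 1 = 1 ∧
        ∀ s ∈ Set.Icc (0:ℝ) 1, f s = N (Matrix.diagonal ![1, (s : ℂ)])) ↔
      (MonotoneOn f (Set.Icc (0:ℝ) 1) ∧ ConvexOn ℝ (Set.Icc (0:ℝ) 1) f ∧
        ∀ s ∈ Set.Icc (0:ℝ) 1, (1 + s) / 2 ≤ f s ∧ f s ≤ 1) := by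
  constructor
  · rintro ⟨N, hN, hN1, hf⟩
    exact Stmt17.forward hN hN1 hf
  · rintro ⟨hm, hc, hb⟩
    exact Stmt17.backward hm hc hb
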